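/- arXiv:1411.0222 — 2 statements merged into one kernel-verified Lean document; each statement's English description precedes it below -/
import Mathlib

section
/- The composition product on pairs of series, c_δ ∘ d_δ = ((c_L ∘̃ d_δ) ⧢ d_L, (c_L ∘̃ d_δ) ⧢ d_R + c_R ∘̃ d_δ), is associative. -/
/-- Formal power series over the alphabet `X = {x₀, x₁}` (encoded as `Bool`,
with `x₀ = false` and `x₁ = true`). -/
abbrev FPS := List Bool → ℝ

/-- The letter `x₀`. -/
def x₀ : Bool := false

/-- The letter `x₁`. -/
def x₁ : Bool := true

/-- Shuffle product of formal power series, via the left-quotient recursion. -/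
noncomputable def shuffle : (List Bool → ℝ) → (List Bool → ℝ) → List Bool → ℝ
  | c, d, [] => c [] * d []
  | c, d, x :: w => shuffle (fun u => c (x :: u)) d w + shuffle c (fun u => d (x :: u)) w

/-- The series `1` (the empty word). -/
noncomputable def oneF : FPS := fun w => match w with | [] => 1 | _ => 0

/-- The series corresponding to a single word. -/
noncomputable def ind (η : List Bool) : FPS := fun w => if w = η then 1 else 0

/-- Left catenation of the series `e` by a letter `x`: the series `x e`. -/
noncomputable def pre (x : Bool) (e : FPS) : FPS :=
  fun w => match w with
  | [] => 0
  | y :: u => if y = x then e u else 0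

/-- The word-indexed family of endomorphisms `φ_d`, determined by
`φ_d(x₀)(e) = x₀ e` and `φ_d(x₁)(e) = x₁(d_L ⧢ e) + x₀(d_R ⧢ e)`. -/
noncomputable def phiW (d : FPS × FPS) : List Bool → FPS → FPS
  | [], e => e
  | x :: η, e =>
      if x then pre x₁ (shuffle d.1 (phiW d η e)) + pre x₀ (shuffle d.2 (phiW d η e))
      else pre x₀ (phiW d η e)

/-- The mixed composition product `c ∘̃ d_δ = Σ_η (c,η) φ_d(η)(1)`.
(For each word `w` only the finitely many `η` with `|η| ≤ |w|` contribute.) -/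
noncomputable def mixedComp (c : FPS) (d : FPS × FPS) : FPS :=
  fun w => ∑' η : List Bool, c η * phiW d η oneF w

/-- The composition product on pairs:
`c_δ ∘ d_δ = ((c_L ∘̃ d_δ) ⧢ d_L, (c_L ∘̃ d_δ) ⧢ d_R + c_R ∘̃ d_δ)`. -/
noncomputable def compD (c d : FPS × FPS) : FPS × FPS :=
  (shuffle (mixedComp c.1 d) d.1,
    shuffle (mixedComp c.1 d) d.2 + mixedComp c.2 d)

lemma shuffle_nil (f g : FPS) : shuffle f g [] = f [] * g [] := rfl

lemma shuffle_cons (f g : FPS) (x : Bool) (w : List Bool) :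
    shuffle f g (x :: w) =
      shuffle (fun u => f (x :: u)) g w + shuffle f (fun u => g (x :: u)) w := rfl

lemma shuffle_congr : ∀ (w : List Bool) {f f' g g' : FPS},
    (∀ u : List Bool, u.length ≤ w.length → f u = f' u) →
    (∀ u : List Bool, u.length ≤ w.length → g u = g' u) →
    shuffle f g w = shuffle f' g' w
  | [], f, f', g, g', hf, hg => by
      simp [shuffle_nil, hf [] (by simp), hg [] (by simp)]
  | x :: w, f, f', g, g', hf, hg => by
      rw [shuffle_cons, shuffle_cons]
      congr 1
      · exact shuffle_congr w
          (fun u hu => hf _ (by simpa using Nat.succ_le_succ hu))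
          (fun u hu => hg _ (Nat.le_succ_of_le hu))
      · exact shuffle_congr w
          (fun u hu => hf _ (Nat.le_succ_of_le hu))
          (fun u hu => hg _ (by simpa using Nat.succ_le_succ hu))

lemma shuffle_congr' {f f' g g' : FPS} (hf : ∀ u, f u = f' u) (hg : ∀ u, g u = g' u)
    (w : List Bool) : shuffle f g w = shuffle f' g' w :=
  shuffle_congr w (fun u _ => hf u) (fun u _ => hg u)

lemma shuffle_add_right : ∀ (w : List Bool) (f g h : FPS),
    shuffle f (fun u => g u + h u) w = shuffle f g w + shuffle f h w
  | [], f, g, h => by simp [shuffle_nil, mul_add]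
  | x :: w, f, g, h => by
      rw [shuffle_cons, shuffle_cons, shuffle_cons]
      rw [shuffle_add_right w (fun u => f (x :: u)) g h]
      rw [shuffle_add_right w f (fun u => g (x :: u)) (fun u => h (x :: u))]
      ring

lemma shuffle_add_left : ∀ (w : List Bool) (f g h : FPS),
    shuffle (fun u => f u + g u) h w = shuffle f h w + shuffle g h w
  | [], f, g, h => by simp [shuffle_nil, add_mul]
  | x :: w, f, g, h => by
      rw [shuffle_cons, shuffle_cons, shuffle_cons]
      rw [shuffle_add_left w (fun u => f (x :: u)) (fun u => g (x :: u)) h]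
      rw [shuffle_add_left w f g (fun u => h (x :: u))]
      ring

lemma shuffle_mul_right : ∀ (w : List Bool) (r : ℝ) (f g : FPS),
    shuffle f (fun u => r * g u) w = r * shuffle f g w
  | [], r, f, g => by simp [shuffle_nil]; ring
  | x :: w, r, f, g => by
      rw [shuffle_cons, shuffle_cons]
      rw [shuffle_mul_right w r (fun u => f (x :: u)) g]
      rw [shuffle_mul_right w r f (fun u => g (x :: u))]
      ring

lemma shuffle_comm : ∀ (w : List Bool) (f g : FPS), shuffle f g w = shuffle g f w
  | [], f, g => by simp [shuffle_nil]; ring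
  | x :: w, f, g => by
      rw [shuffle_cons, shuffle_cons]
      rw [shuffle_comm w (fun u => f (x :: u)) g, shuffle_comm w f (fun u => g (x :: u))]
      ring

lemma shuffle_assoc : ∀ (w : List Bool) (f g h : FPS),
    shuffle (shuffle f g) h w = shuffle f (shuffle g h) w
  | [], f, g, h => by simp [shuffle_nil]; ring
  | x :: w, f, g, h => by
      rw [shuffle_cons (shuffle f g) h x w, shuffle_cons f (shuffle g h) x w]
      have e1 : shuffle (fun u => shuffle f g (x :: u)) h w
          = shuffle (fun u => shuffle (fun v => f (x :: v)) g u
              + shuffle f (fun v => g (x :: v)) u) h w :=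
        shuffle_congr' (fun u => shuffle_cons f g x u) (fun _ => rfl) w
      have e2 : shuffle f (fun u => shuffle g h (x :: u)) w
          = shuffle f (fun u => shuffle (fun v => g (x :: v)) h u
              + shuffle g (fun v => h (x :: v)) u) w :=
        shuffle_congr' (fun _ => rfl) (fun u => shuffle_cons g h x u) w
      rw [e1, e2, shuffle_add_left, shuffle_add_right]
      rw [shuffle_assoc w (fun v => f (x :: v)) g h,
          shuffle_assoc w f (fun v => g (x :: v)) h,
          shuffle_assoc w f g (fun v => h (x :: v))]
      ring

lemma shuffle_zero_right : ∀ (w : List Bool) (f g : FPS),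
    (∀ u : List Bool, u.length ≤ w.length → g u = 0) → shuffle f g w = 0
  | [], f, g, hg => by simp [shuffle_nil, hg [] (by simp)]
  | x :: w, f, g, hg => by
      rw [shuffle_cons]
      rw [shuffle_zero_right w (fun u => f (x :: u)) g
          (fun u hu => hg u (Nat.le_succ_of_le hu))]
      rw [shuffle_zero_right w f (fun u => g (x :: u))
          (fun u hu => hg _ (by simpa using Nat.succ_le_succ hu))]
      ring

lemma phiW_short (d : FPS × FPS) :
    ∀ (η w : List Bool), w.length < η.length → phiW d η oneF w = 0
  | x :: η', [], h => by
      cases x <;> simp [phiW, pre, Pi.add_apply]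
  | x :: η', y :: w', h => by
      have h' : w'.length < η'.length := by simpa using h
      have hz : ∀ u : List Bool, u.length ≤ w'.length → phiW d η' oneF u = 0 :=
        fun u hu => phiW_short d η' u (lt_of_le_of_lt hu h')
      cases x <;> cases y <;>
        simp [phiW, pre, x₀, x₁, Pi.add_apply, phiW_short d η' w' h',
          shuffle_zero_right w' d.1 (phiW d η' oneF) hz,
          shuffle_zero_right w' d.2 (phiW d η' oneF) hz]

lemma summable_cut (F : List Bool → ℝ) (n : ℕ)
    (h : ∀ η : List Bool, n < η.length → F η = 0) : Summable F :=
  summable_of_finite_support <| (List.finite_length_le Bool n).subset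
    (fun η hη => le_of_not_gt fun hlen => hη (h η hlen))

lemma shuffle_tsum : ∀ (w : List Bool) (g : FPS) (n : ℕ) (F : List Bool → FPS),
    (∀ (η u : List Bool), u.length + n < η.length → F η u = 0) →
    shuffle g (fun u => ∑' η, F η u) w = ∑' η, shuffle g (F η) w
  | [], g, n, F, h => by
      rw [shuffle_nil, ← tsum_mul_left]
      exact tsum_congr fun η => (shuffle_nil g (F η)).symm
  | x :: w, g, n, F, h => by
      rw [shuffle_cons]
      rw [shuffle_tsum w (fun u => g (x :: u)) n F h]
      have e : shuffle g (fun u => (fun v => ∑' η, F η v) (x :: u)) w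
          = shuffle g (fun u => ∑' η, (fun v => F η (x :: v)) u) w := rfl
      rw [e, shuffle_tsum w g (n + 1) (fun η v => F η (x :: v))
          (fun η u hu => h η (x :: u) (by simpa using by omega))]
      have s1 : Summable (fun η => shuffle (fun u => g (x :: u)) (F η) w) :=
        summable_cut _ (w.length + n) (fun η hη =>
          shuffle_zero_right w _ (F η) (fun u hu => h η u (by omega)))
      have s2 : Summable (fun η => shuffle g (fun v => F η (x :: v)) w) :=
        summable_cut _ (w.length + n + 1) (fun η hη =>
          shuffle_zero_right w g _ (fun u hu => h η (x :: u) (by simp; omega)))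
      rw [← Summable.tsum_add s1 s2]
      exact tsum_congr fun η => (shuffle_cons g (F η) x w).symm

lemma mixedComp_nil (c : FPS) (d : FPS × FPS) : mixedComp c d [] = c [] := by
  unfold mixedComp
  rw [tsum_eq_single ([] : List Bool)]
  · simp [phiW, oneF]
  · intro η hη
    have : ([] : List Bool).length < η.length := by
      cases η with
      | nil => exact absurd rfl hη
      | cons a l => simp
    rw [phiW_short d η [] this, mul_zero]

lemma mixedComp_true (c : FPS) (d : FPS × FPS) (w : List Bool) :
    mixedComp c d (true :: w) = shuffle d.1 (mixedComp (fun η => c (true :: η)) d) w := by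
  have hcomp : ∀ η' : List Bool,
      phiW d (true :: η') oneF (true :: w) = shuffle d.1 (phiW d η' oneF) w := by
    intro η'; simp [phiW, pre, x₀, x₁, Pi.add_apply]
  have hsupp : Function.support (fun η => c η * phiW d η oneF (true :: w))
      ⊆ Set.range (fun η' : List Bool => true :: η') := by
    intro η hη
    match η with
    | [] => exact absurd (mul_eq_zero_of_right _ rfl) hη
    | false :: η' => exact absurd (mul_eq_zero_of_right _ rfl) hη
    | true :: η' => exact ⟨η', rfl⟩
  have hinj : Function.Injective (fun η' : List Bool => true :: η') := by
    intro a b hab; simpa using hab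
  have h1 : mixedComp c d (true :: w)
      = ∑' η' : List Bool, c (true :: η') * phiW d (true :: η') oneF (true :: w) :=
    (hinj.tsum_eq hsupp).symm
  rw [h1]
  have h2 : (∑' η' : List Bool, c (true :: η') * phiW d (true :: η') oneF (true :: w))
      = ∑' η' : List Bool, c (true :: η') * shuffle d.1 (phiW d η' oneF) w :=
    tsum_congr fun η' => by rw [hcomp]
  rw [h2]
  have h3 : shuffle d.1 (mixedComp (fun η => c (true :: η)) d) w
      = ∑' η' : List Bool, shuffle d.1 (fun u => c (true :: η') * phiW d η' oneF u) w :=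
    shuffle_tsum w d.1 0 (fun η' u => c (true :: η') * phiW d η' oneF u)
      (fun η' u hu => by
        show c (true :: η') * phiW d η' oneF u = 0
        rw [phiW_short d η' u (by omega), mul_zero])
  rw [h3]
  exact (tsum_congr fun η' => by rw [shuffle_mul_right]).symm

lemma mixedComp_false (c : FPS) (d : FPS × FPS) (w : List Bool) :
    mixedComp c d (false :: w)
      = mixedComp (fun η => c (false :: η)) d w
        + shuffle d.2 (mixedComp (fun η => c (true :: η)) d) w := by
  classical
  set f₁ : List Bool → ℝ := fun η => match η with
    | false :: η' => c (false :: η') * phiW d η' oneF w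
    | _ => 0 with hf₁
  set f₂ : List Bool → ℝ := fun η => match η with
    | true :: η' => c (true :: η') * shuffle d.2 (phiW d η' oneF) w
    | _ => 0 with hf₂
  have hsplit : ∀ η : List Bool,
      c η * phiW d η oneF (false :: w) = f₁ η + f₂ η := by
    intro η
    match η with
    | [] =>
        show c [] * phiW d [] oneF (false :: w) = 0 + 0
        rw [show phiW d [] oneF (false :: w) = 0 from rfl]; ring
    | false :: η' => simp [hf₁, hf₂, phiW, pre, x₀, Pi.add_apply]
    | true :: η' => simp [hf₁, hf₂, phiW, pre, x₀, x₁, Pi.add_apply]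
  have s1 : Summable f₁ := by
    apply summable_cut _ (w.length + 1)
    intro η hη
    match η with
    | [] => rfl
    | true :: η' => rfl
    | false :: η' =>
        simp only [hf₁]
        rw [phiW_short d η' w (by simp at hη; omega), mul_zero]
  have s2 : Summable f₂ := by
    apply summable_cut _ (w.length + 1)
    intro η hη
    match η with
    | [] => rfl
    | false :: η' => rfl
    | true :: η' =>
        simp only [hf₂]
        rw [shuffle_zero_right w d.2 (phiW d η' oneF)
          (fun u hu => phiW_short d η' u (by simp at hη; omega)), mul_zero]
  have h0 : mixedComp c d (false :: w) = ∑' η, (f₁ η + f₂ η) :=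
    tsum_congr hsplit
  rw [h0, Summable.tsum_add s1 s2]
  congr 1
  · have hinj : Function.Injective (fun η' : List Bool => false :: η') := by
      intro a b hab; simpa using hab
    have hsupp : Function.support f₁ ⊆ Set.range (fun η' : List Bool => false :: η') := by
      intro η hη
      match η with
      | [] => exact absurd rfl hη
      | true :: η' => exact absurd rfl hη
      | false :: η' => exact ⟨η', rfl⟩
    exact (hinj.tsum_eq hsupp).symm
  · have hinj : Function.Injective (fun η' : List Bool => true :: η') := by
      intro a b hab; simpa using hab
    have hsupp : Function.support f₂ ⊆ Set.range (fun η' : List Bool => true :: η') := by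
      intro η hη
      match η with
      | [] => exact absurd rfl hη
      | false :: η' => exact absurd rfl hη
      | true :: η' => exact ⟨η', rfl⟩
    rw [← hinj.tsum_eq hsupp]
    have h3 : shuffle d.2 (mixedComp (fun η => c (true :: η)) d) w
        = ∑' η' : List Bool, shuffle d.2 (fun u => c (true :: η') * phiW d η' oneF u) w :=
      shuffle_tsum w d.2 0 (fun η' u => c (true :: η') * phiW d η' oneF u)
        (fun η' u hu => by
          show c (true :: η') * phiW d η' oneF u = 0
          rw [phiW_short d η' u (by omega), mul_zero])
    rw [h3]
    exact (tsum_congr fun η' => by rw [shuffle_mul_right]).symm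

lemma mixedComp_add (a b : FPS) (d : FPS × FPS) (w : List Bool) :
    mixedComp (fun η => a η + b η) d w = mixedComp a d w + mixedComp b d w := by
  unfold mixedComp
  have h : ∀ η : List Bool, (a η + b η) * phiW d η oneF w
      = a η * phiW d η oneF w + b η * phiW d η oneF w := fun η => add_mul _ _ _
  rw [tsum_congr h]
  exact Summable.tsum_add
    (summable_cut _ w.length (fun η hη => by rw [phiW_short d η w hη, mul_zero]))
    (summable_cut _ w.length (fun η hη => by rw [phiW_short d η w hη, mul_zero]))

lemma shuffle_left_comm (w : List Bool) (f g h : FPS) :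
    shuffle f (shuffle g h) w = shuffle g (shuffle f h) w := by
  rw [← shuffle_assoc w f g h, ← shuffle_assoc w g f h]
  exact shuffle_congr' (fun u => shuffle_comm u f g) (fun _ => rfl) w

/-- The mixed composition product is a shuffle-algebra homomorphism in its
first argument (bounded-length version, by strong induction on word length). -/
lemma mixedComp_shuffle_aux (d : FPS × FPS) : ∀ (n : ℕ) (a b : FPS) (w : List Bool),
    w.length ≤ n →
    mixedComp (shuffle a b) d w = shuffle (mixedComp a d) (mixedComp b d) w := by
  intro n
  induction n with
  | zero =>
      intro a b w hw
      have hw0 : w = [] := by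
        cases w with
        | nil => rfl
        | cons x w' => simp at hw
      subst hw0
      rw [mixedComp_nil (shuffle a b) d, shuffle_nil a b,
        shuffle_nil (mixedComp a d) (mixedComp b d), mixedComp_nil a d, mixedComp_nil b d]
  | succ n ih =>
      intro a b w hw
      cases w with
      | nil =>
          rw [mixedComp_nil (shuffle a b) d, shuffle_nil a b,
            shuffle_nil (mixedComp a d) (mixedComp b d), mixedComp_nil a d, mixedComp_nil b d]
      | cons x w' =>
          have hw' : w'.length ≤ n := by simpa using hw
          -- abbreviations (plain terms, no `set`)
          -- the key transformation of the `true`-derivative term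
          have keyT : ∀ gg : FPS,
              shuffle gg (mixedComp (fun η => shuffle a b (true :: η)) d) w'
              = shuffle gg (shuffle (mixedComp (fun v => a (true :: v)) d) (mixedComp b d)) w'
                + shuffle gg (shuffle (mixedComp a d) (mixedComp (fun v => b (true :: v)) d)) w' := by
            intro gg
            have h1 : shuffle gg (mixedComp (fun η => shuffle a b (true :: η)) d) w'
                = shuffle gg (fun u => shuffle (mixedComp (fun v => a (true :: v)) d) (mixedComp b d) u
                    + shuffle (mixedComp a d) (mixedComp (fun v => b (true :: v)) d) u) w' := by
              refine shuffle_congr w' (fun u _ => rfl) (fun u hu => ?_)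
              have h2 : (fun η => shuffle a b (true :: η))
                  = fun η => shuffle (fun v => a (true :: v)) b η
                      + shuffle a (fun v => b (true :: v)) η :=
                funext fun η => shuffle_cons a b true η
              rw [h2, mixedComp_add _ _ d u,
                ih (fun v => a (true :: v)) b u (le_trans hu hw'),
                ih a (fun v => b (true :: v)) u (le_trans hu hw')]
            rw [h1]
            exact shuffle_add_right w' gg _ _
          cases x with
          | true =>
              have hL : mixedComp (shuffle a b) d (true :: w')
                  = shuffle (shuffle d.1 (mixedComp (fun v => a (true :: v)) d)) (mixedComp b d) w'
                    + shuffle (mixedComp a d) (shuffle d.1 (mixedComp (fun v => b (true :: v)) d)) w' := by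
                rw [mixedComp_true (shuffle a b) d w', keyT d.1,
                  ← shuffle_assoc w' d.1 (mixedComp (fun v => a (true :: v)) d) (mixedComp b d),
                  shuffle_left_comm w' d.1 (mixedComp a d) (mixedComp (fun v => b (true :: v)) d)]
              have hR : shuffle (mixedComp a d) (mixedComp b d) (true :: w')
                  = shuffle (shuffle d.1 (mixedComp (fun v => a (true :: v)) d)) (mixedComp b d) w'
                    + shuffle (mixedComp a d) (shuffle d.1 (mixedComp (fun v => b (true :: v)) d)) w' := by
                rw [shuffle_cons (mixedComp a d) (mixedComp b d) true w']
                have e1 : (fun u => mixedComp a d (true :: u))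
                    = shuffle d.1 (mixedComp (fun v => a (true :: v)) d) :=
                  funext fun u => mixedComp_true a d u
                have e2 : (fun u => mixedComp b d (true :: u))
                    = shuffle d.1 (mixedComp (fun v => b (true :: v)) d) :=
                  funext fun u => mixedComp_true b d u
                rw [e1, e2]
              rw [hL, hR]
          | false =>
              have hdf : (fun η => shuffle a b (false :: η))
                  = fun η => shuffle (fun v => a (false :: v)) b η
                      + shuffle a (fun v => b (false :: v)) η :=
                funext fun η => shuffle_cons a b false η
              have hL : mixedComp (shuffle a b) d (false :: w')
                  = shuffle (mixedComp (fun v => a (false :: v)) d) (mixedComp b d) w'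
                    + shuffle (mixedComp a d) (mixedComp (fun v => b (false :: v)) d) w'
                    + (shuffle (shuffle d.2 (mixedComp (fun v => a (true :: v)) d)) (mixedComp b d) w'
                      + shuffle (mixedComp a d) (shuffle d.2 (mixedComp (fun v => b (true :: v)) d)) w') := by
                rw [mixedComp_false (shuffle a b) d w', hdf, mixedComp_add _ _ d w',
                  ih (fun v => a (false :: v)) b w' hw',
                  ih a (fun v => b (false :: v)) w' hw',
                  keyT d.2,
                  ← shuffle_assoc w' d.2 (mixedComp (fun v => a (true :: v)) d) (mixedComp b d),
                  shuffle_left_comm w' d.2 (mixedComp a d) (mixedComp (fun v => b (true :: v)) d)]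
              have hR : shuffle (mixedComp a d) (mixedComp b d) (false :: w')
                  = (shuffle (mixedComp (fun v => a (false :: v)) d) (mixedComp b d) w'
                      + shuffle (shuffle d.2 (mixedComp (fun v => a (true :: v)) d)) (mixedComp b d) w')
                    + (shuffle (mixedComp a d) (mixedComp (fun v => b (false :: v)) d) w'
                      + shuffle (mixedComp a d) (shuffle d.2 (mixedComp (fun v => b (true :: v)) d)) w') := by
                rw [shuffle_cons (mixedComp a d) (mixedComp b d) false w']
                have e1 : (fun u => mixedComp a d (false :: u))
                    = fun u => mixedComp (fun v => a (false :: v)) d u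
                        + shuffle d.2 (mixedComp (fun v => a (true :: v)) d) u :=
                  funext fun u => mixedComp_false a d u
                have e2 : (fun u => mixedComp b d (false :: u))
                    = fun u => mixedComp (fun v => b (false :: v)) d u
                        + shuffle d.2 (mixedComp (fun v => b (true :: v)) d) u :=
                  funext fun u => mixedComp_false b d u
                rw [e1, e2, shuffle_add_left w' _ _ (mixedComp b d),
                  shuffle_add_right w' (mixedComp a d) _ _]
              rw [hL, hR]
              ring

/-- The mixed composition product is a shuffle-algebra homomorphism. -/
lemma mixedComp_shuffle (d : FPS × FPS) (a b : FPS) :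
    mixedComp (shuffle a b) d = shuffle (mixedComp a d) (mixedComp b d) :=
  funext fun w => mixedComp_shuffle_aux d w.length a b w le_rfl

/-- Associativity of the mixed composition product with the composition on
pairs (bounded-length version, by strong induction on word length). -/
lemma mixedComp_comp_aux (d e : FPS × FPS) : ∀ (n : ℕ) (c : FPS) (w : List Bool),
    w.length ≤ n →
    mixedComp (mixedComp c d) e w = mixedComp c (compD d e) w := by
  intro n
  induction n with
  | zero =>
      intro c w hw
      have hw0 : w = [] := by
        cases w with
        | nil => rfl
        | cons x w' => simp at hw
      subst hw0
      rw [mixedComp_nil, mixedComp_nil, mixedComp_nil]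
  | succ n ih =>
      intro c w hw
      cases w with
      | nil => rw [mixedComp_nil, mixedComp_nil, mixedComp_nil]
      | cons x w' =>
          have hw' : w'.length ≤ n := by simpa using hw
          have keyT : ∀ gg : FPS,
              shuffle gg (mixedComp (fun u => mixedComp c d (true :: u)) e) w'
              = shuffle gg (shuffle (mixedComp d.1 e)
                  (mixedComp (fun η => c (true :: η)) (compD d e))) w' := by
            intro gg
            have h1 : (fun u => mixedComp c d (true :: u))
                = shuffle d.1 (mixedComp (fun η => c (true :: η)) d) :=
              funext fun u => mixedComp_true c d u
            rw [h1, mixedComp_shuffle e d.1 (mixedComp (fun η => c (true :: η)) d)]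
            refine shuffle_congr w' (fun u _ => rfl) (fun u hu => ?_)
            exact shuffle_congr u (fun v _ => rfl)
              (fun v hv => ih (fun η => c (true :: η)) v
                (le_trans hv (le_trans hu hw')))
          cases x with
          | true =>
              have hL : mixedComp (mixedComp c d) e (true :: w')
                  = shuffle (shuffle (mixedComp d.1 e) e.1)
                      (mixedComp (fun η => c (true :: η)) (compD d e)) w' := by
                rw [mixedComp_true (mixedComp c d) e w', keyT e.1,
                  ← shuffle_assoc w' e.1 (mixedComp d.1 e)
                    (mixedComp (fun η => c (true :: η)) (compD d e))]
                exact shuffle_congr'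
                  (fun u => shuffle_comm u e.1 (mixedComp d.1 e)) (fun _ => rfl) w'
              have hR : mixedComp c (compD d e) (true :: w')
                  = shuffle (shuffle (mixedComp d.1 e) e.1)
                      (mixedComp (fun η => c (true :: η)) (compD d e)) w' :=
                mixedComp_true c (compD d e) w'
              rw [hL, hR]
          | false =>
              have h1f : (fun u => mixedComp c d (false :: u))
                  = fun u => mixedComp (fun η => c (false :: η)) d u
                      + shuffle d.2 (mixedComp (fun η => c (true :: η)) d) u :=
                funext fun u => mixedComp_false c d u
              have hL : mixedComp (mixedComp c d) e (false :: w')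
                  = mixedComp (fun η => c (false :: η)) (compD d e) w'
                    + shuffle (mixedComp d.2 e)
                        (mixedComp (fun η => c (true :: η)) (compD d e)) w'
                    + shuffle (shuffle (mixedComp d.1 e) e.2)
                        (mixedComp (fun η => c (true :: η)) (compD d e)) w' := by
                rw [mixedComp_false (mixedComp c d) e w', h1f, mixedComp_add _ _ e w',
                  ih (fun η => c (false :: η)) w' hw',
                  mixedComp_shuffle e d.2 (mixedComp (fun η => c (true :: η)) d),
                  keyT e.2,
                  ← shuffle_assoc w' e.2 (mixedComp d.1 e)
                    (mixedComp (fun η => c (true :: η)) (compD d e))]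
                have h2 : shuffle (mixedComp d.2 e)
                      (mixedComp (mixedComp (fun η => c (true :: η)) d) e) w'
                    = shuffle (mixedComp d.2 e)
                      (mixedComp (fun η => c (true :: η)) (compD d e)) w' :=
                  shuffle_congr w' (fun u _ => rfl)
                    (fun u hu => ih (fun η => c (true :: η)) u (le_trans hu hw'))
                have h3 : shuffle (shuffle e.2 (mixedComp d.1 e))
                      (mixedComp (fun η => c (true :: η)) (compD d e)) w'
                    = shuffle (shuffle (mixedComp d.1 e) e.2)
                      (mixedComp (fun η => c (true :: η)) (compD d e)) w' :=
                  shuffle_congr' (fun u => shuffle_comm u e.2 (mixedComp d.1 e))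
                    (fun _ => rfl) w'
                rw [h2, h3]
              have hR : mixedComp c (compD d e) (false :: w')
                  = mixedComp (fun η => c (false :: η)) (compD d e) w'
                    + (shuffle (shuffle (mixedComp d.1 e) e.2)
                        (mixedComp (fun η => c (true :: η)) (compD d e)) w'
                      + shuffle (mixedComp d.2 e)
                        (mixedComp (fun η => c (true :: η)) (compD d e)) w') := by
                rw [mixedComp_false c (compD d e) w']
                have h4 : shuffle (compD d e).2
                      (mixedComp (fun η => c (true :: η)) (compD d e)) w'
                    = shuffle (shuffle (mixedComp d.1 e) e.2)
                        (mixedComp (fun η => c (true :: η)) (compD d e)) w'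
                      + shuffle (mixedComp d.2 e)
                        (mixedComp (fun η => c (true :: η)) (compD d e)) w' :=
                  shuffle_add_left w' (shuffle (mixedComp d.1 e) e.2) (mixedComp d.2 e)
                    (mixedComp (fun η => c (true :: η)) (compD d e))
                rw [h4]
              rw [hL, hR]
              ring

/-- Associativity of the mixed composition product. -/
lemma mixedComp_comp (d e : FPS × FPS) (c : FPS) :
    mixedComp (mixedComp c d) e = mixedComp c (compD d e) :=
  funext fun w => mixedComp_comp_aux d e w.length c w le_rfl

lemma shuffle_assocF (f g h : FPS) :
    shuffle (shuffle f g) h = shuffle f (shuffle g h) :=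
  funext fun w => shuffle_assoc w f g h

lemma shuffle_add_rightF (f g h : FPS) :
    shuffle f (g + h) = shuffle f g + shuffle f h :=
  funext fun w => shuffle_add_right w f g h

lemma mixedComp_addF (a b : FPS) (d : FPS × FPS) :
    mixedComp (a + b) d = mixedComp a d + mixedComp b d :=
  funext fun w => mixedComp_add a b d w

/-- The composition product on pairs of series is associative. -/
theorem compD_assoc (c d e : FPS × FPS) :
    compD (compD c d) e = compD c (compD d e) := by
  have hfst : (compD (compD c d) e).1 = (compD c (compD d e)).1 := by
    show shuffle (mixedComp (shuffle (mixedComp c.1 d) d.1) e) e.1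
        = shuffle (mixedComp c.1 (compD d e)) (shuffle (mixedComp d.1 e) e.1)
    rw [mixedComp_shuffle e (mixedComp c.1 d) d.1, mixedComp_comp d e c.1,
      shuffle_assocF]
  have hsnd : (compD (compD c d) e).2 = (compD c (compD d e)).2 := by
    show shuffle (mixedComp (shuffle (mixedComp c.1 d) d.1) e) e.2
        + mixedComp (shuffle (mixedComp c.1 d) d.2 + mixedComp c.2 d) e
      = shuffle (mixedComp c.1 (compD d e))
          (shuffle (mixedComp d.1 e) e.2 + mixedComp d.2 e)
        + mixedComp c.2 (compD d e)
    rw [mixedComp_shuffle e (mixedComp c.1 d) d.1, mixedComp_comp d e c.1,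
      shuffle_assocF, mixedComp_addF, mixedComp_shuffle e (mixedComp c.1 d) d.2,
      mixedComp_comp d e c.1, mixedComp_comp d e c.2, shuffle_add_rightF]
    abel
  exact Prod.ext hfst hsnd
end

section
/- A series c over X = {x₀,x₁} has relative degree r if and only if there exists a pair e_δ = (e_L, e_R) with e_L non-proper such that c = (c_N + x₀^{r-1}x₁) ∘̃ e_δ, where c_N = Σ_k (c, x₀^k) x₀^k is the natural part of c. -/
/-- The natural part `c_N = Σ_k (c, x₀^k) x₀^k` of a series. -/
noncomputable def natPart (c : FPS) : FPS :=
  fun w => if w = List.replicate w.length x₀ then c w else 0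

lemma shuffle_zero (c : FPS) : ∀ w, shuffle c (fun _ => (0:ℝ)) w = 0
  | [] => by simp [shuffle]
  | x :: w => by
      show shuffle (fun u => c (x::u)) (fun _ => 0) w
          + shuffle c (fun u => (fun _ => (0:ℝ)) (x::u)) w = 0
      rw [shuffle_zero, shuffle_zero, add_zero]

lemma shuffle_oneF (c : FPS) : ∀ w, shuffle c oneF w = c w
  | [] => by simp [shuffle, oneF]
  | x :: w => by
      have h1 : shuffle (fun u => c (x::u)) oneF w = c (x::w) := shuffle_oneF _ w
      have h2 : (fun u => oneF (x :: u)) = (fun _ => (0:ℝ)) := by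
        funext u; simp [oneF]
      show shuffle (fun u => c (x::u)) oneF w + shuffle c (fun u => oneF (x::u)) w = c (x::w)
      rw [h1, h2, shuffle_zero, add_zero]

lemma phiW_nil (e : FPS × FPS) (f : FPS) : phiW e [] f = f := rfl
lemma phiW_false (e : FPS × FPS) (η : List Bool) (f : FPS) :
    phiW e (false :: η) f = pre x₀ (phiW e η f) := by simp [phiW]
lemma phiW_true (e : FPS × FPS) (η : List Bool) (f : FPS) :
    phiW e (true :: η) f
      = pre x₁ (shuffle e.1 (phiW e η f)) + pre x₀ (shuffle e.2 (phiW e η f)) := by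
  simp [phiW]

lemma pre_cons (x : Bool) (f : FPS) (y : Bool) (u : List Bool) :
    pre x f (y :: u) = if y = x then f u else 0 := rfl

lemma phiW_rep (e : FPS × FPS) (η : List Bool) (f : FPS) :
    ∀ (k : ℕ) (w : List Bool), phiW e (List.replicate k x₀ ++ η) f w =
      if List.replicate k x₀ <+: w then phiW e η f (w.drop k) else 0
  | 0, w => by simp
  | k+1, [] => by
      rw [List.replicate_succ, List.cons_append]
      show pre x₀ (phiW e (List.replicate k x₀ ++ η) f) [] = _
      have : ¬ (List.replicate (k+1) x₀ <+: ([] : List Bool)) := by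
        simp [List.prefix_nil, List.replicate_succ]
      simp [pre, this]
  | k+1, y :: u => by
      rw [List.replicate_succ, List.cons_append]
      show pre x₀ (phiW e (List.replicate k x₀ ++ η) f) (y :: u) = _
      rw [pre_cons, phiW_rep e η f k u]
      by_cases hy : y = x₀
      · subst hy
        simp [List.cons_prefix_cons]
      · simp [hy, List.cons_prefix_cons, Ne.symm hy]

lemma phiW_pow (e : FPS × FPS) (k : ℕ) (w : List Bool) :
    phiW e (List.replicate k x₀) oneF w = if w = List.replicate k x₀ then 1 else 0 := by
  have := phiW_rep e [] oneF k w
  rw [List.append_nil] at this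
  rw [this]
  by_cases hw : w = List.replicate k x₀
  · subst hw
    simp [phiW_nil, oneF, List.prefix_refl]
  · have : ¬ (List.replicate k x₀ <+: w) ∨ (List.replicate k x₀ <+: w) := (em _).symm
    rcases this with h | h
    · simp [h, hw]
    · rw [if_pos h, if_neg hw, phiW_nil]
      -- drop k w must be nonempty, else w = replicate k x₀
      rcases h with ⟨t, ht⟩
      have hk : w.length ≥ k := by
        rw [← ht]; simp
      cases hd : w.drop k with
      | nil =>
          exfalso
          have hlen : w.length - k = 0 := by
            have := congrArg List.length hd
            simpa using this
          apply hw
          have h2 : (List.replicate k x₀).length = w.length := by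
            simp; omega
          exact (List.IsPrefix.eq_of_length ⟨t, ht⟩ h2).symm
      | cons a l => simp [oneF]

lemma true_mem_word (r : ℕ) : x₁ ∈ List.replicate (r-1) x₀ ++ [x₁] := by
  simp

lemma word_ne_rep (r n : ℕ) : List.replicate (r-1) x₀ ++ [x₁] ≠ List.replicate n x₀ := by
  intro h
  have := true_mem_word r
  rw [h] at this
  rw [List.mem_replicate] at this
  exact absurd this.2 (by simp [x₀, x₁])

lemma mixedComp_eval (c : FPS) (e : FPS × FPS) (r : ℕ) (w : List Bool) :
    mixedComp (natPart c + ind (List.replicate (r - 1) x₀ ++ [x₁])) e w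
      = natPart c w + phiW e (List.replicate (r - 1) x₀ ++ [x₁]) oneF w := by
  classical
  set q := List.replicate (r-1) x₀ ++ [x₁] with hq
  set p := List.replicate w.length x₀ with hp
  have hpq : p ≠ q := fun h => word_ne_rep r w.length h.symm
  have hnatq : natPart c q = 0 := by
    rw [natPart]
    rw [if_neg (word_ne_rep r q.length)]
  set F : List Bool → ℝ := fun η => (natPart c + ind q) η * phiW e η oneF w with hF
  have hsupp : ∀ η ∉ ({p, q} : Finset (List Bool)), F η = 0 := by
    intro η hη
    simp only [Finset.mem_insert, Finset.mem_singleton, not_or] at hη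
    obtain ⟨hηp, hηq⟩ := hη
    have hind : ind q η = 0 := by simp [ind, hηq]
    simp only [hF, Pi.add_apply, hind, add_zero]
    by_cases hnat : η = List.replicate η.length x₀
    · rw [hnat, phiW_pow]
      have hne : w ≠ List.replicate η.length x₀ := by
        intro hw
        apply hηp
        have hlen : w.length = η.length := by rw [hw]; simp
        rw [hnat, hp, hlen]
      rw [if_neg hne, mul_zero]
    · rw [natPart, if_neg hnat, zero_mul]
  have : mixedComp (natPart c + ind q) e w = ∑ η ∈ ({p, q} : Finset (List Bool)), F η := by
    rw [mixedComp]
    exact tsum_eq_sum hsupp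
  rw [this, Finset.sum_pair hpq]
  show (natPart c + ind q) p * phiW e p oneF w + (natPart c + ind q) q * phiW e q oneF w
      = natPart c w + phiW e q oneF w
  have hFp : (natPart c + ind q) p * phiW e p oneF w = natPart c w := by
    have hindp : ind q p = 0 := by simp [ind, hpq]
    rw [Pi.add_apply, hindp, add_zero, hp, phiW_pow]
    by_cases hw : w = List.replicate w.length x₀
    · rw [if_pos hw, mul_one, ← hw]
    · rw [if_neg hw, mul_zero]
      simp only [natPart, if_neg hw]
  have hFq : (natPart c + ind q) q * phiW e q oneF w = phiW e q oneF w := by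
    rw [Pi.add_apply, hnatq, zero_add]
    simp [ind]
  rw [hFp, hFq]

lemma phiW_x1 (e : FPS × FPS) (u : List Bool) :
    phiW e [x₁] oneF u = pre x₁ e.1 u + pre x₀ e.2 u := by
  have h1 : shuffle e.1 oneF = e.1 := funext (shuffle_oneF e.1)
  have h2 : shuffle e.2 oneF = e.2 := funext (shuffle_oneF e.2)
  rw [show ([x₁] : List Bool) = true :: [] from rfl, phiW_true, phiW_nil, h1, h2]
  rfl

lemma G_eval (e : FPS × FPS) (r : ℕ) (w : List Bool) :
    phiW e (List.replicate (r-1) x₀ ++ [x₁]) oneF w =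
      if List.replicate (r-1) x₀ <+: w then
        pre x₁ e.1 (w.drop (r-1)) + pre x₀ e.2 (w.drop (r-1)) else 0 := by
  rw [phiW_rep]
  by_cases h : List.replicate (r-1) x₀ <+: w
  · rw [if_pos h, if_pos h, phiW_x1]
  · rw [if_neg h, if_neg h]


/-- `c` has relative degree `r ≥ 1`: `r` is the largest integer with
`supp(c_F) ⊆ x₀^{r-1} X*`, and `x₀^{r-1} x₁ ∈ supp(c)`, where `c_F = c - c_N`. -/
def HasRelDeg (c : FPS) (r : ℕ) : Prop :=
  1 ≤ r ∧
  (∀ w, (c - natPart c) w ≠ 0 → List.replicate (r - 1) x₀ <+: w) ∧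
  ¬(∀ w, (c - natPart c) w ≠ 0 → List.replicate r x₀ <+: w) ∧
  c (List.replicate (r - 1) x₀ ++ [x₁]) ≠ 0

/-- A series has relative degree `r` iff it lies on the orbit of `c_N + x₀^{r-1}x₁`
under the affine feedback transformation group. -/
theorem hasRelDeg_iff_orbit (c : FPS) (r : ℕ) (hr : 1 ≤ r) :
    HasRelDeg c r ↔
      ∃ e : FPS × FPS, e.1 [] ≠ 0 ∧
        c = mixedComp (natPart c + ind (List.replicate (r - 1) x₀ ++ [x₁])) e := by
  constructor
  · rintro ⟨-, h2, -, h4⟩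
    refine ⟨(fun u => (c - natPart c) (List.replicate (r-1) x₀ ++ x₁ :: u),
             fun u => (c - natPart c) (List.replicate (r-1) x₀ ++ x₀ :: u)), ?_, ?_⟩
    · show (c - natPart c) (List.replicate (r-1) x₀ ++ x₁ :: []) ≠ 0
      have hn : natPart c (List.replicate (r-1) x₀ ++ [x₁]) = 0 := by
        simp only [natPart, if_neg (word_ne_rep r _)]
      simpa [Pi.sub_apply, hn] using h4
    · funext w
      rw [mixedComp_eval, G_eval]
      by_cases hv : List.replicate (r-1) x₀ <+: w
      · rw [if_pos hv]
        obtain ⟨u, hu⟩ := hv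
        subst hu
        have hdrop : (List.replicate (r-1) x₀ ++ u).drop (r-1) = u :=
          List.drop_left' (by simp)
        rw [hdrop]
        cases u with
        | nil => simp [pre, natPart]
        | cons b u' =>
            cases b with
            | true => simp [pre, x₀, x₁, Pi.sub_apply]
            | false => simp [pre, x₀, x₁, Pi.sub_apply]
      · rw [if_neg hv, add_zero]
        have h0 : (c - natPart c) w = 0 := by
          by_contra h
          exact hv (h2 w h)
        rw [Pi.sub_apply] at h0
        linarith
  · rintro ⟨e, he, hc⟩
    have hcf : ∀ w, (c - natPart c) w
        = phiW e (List.replicate (r-1) x₀ ++ [x₁]) oneF w := by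
      intro w
      rw [Pi.sub_apply, congrFun hc w, mixedComp_eval]
      ring
    have hpref : List.replicate (r-1) x₀ <+: List.replicate (r-1) x₀ ++ [x₁] :=
      ⟨[x₁], rfl⟩
    have hdrop : (List.replicate (r-1) x₀ ++ [x₁]).drop (r-1) = [x₁] :=
      List.drop_left' (by simp)
    have h0 : (c - natPart c) (List.replicate (r-1) x₀ ++ [x₁]) = e.1 [] := by
      rw [hcf, G_eval, if_pos hpref, hdrop]
      simp [pre, x₀, x₁]
    refine ⟨hr, ?_, ?_, ?_⟩
    · intro w hw
      rw [hcf, G_eval] at hw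
      by_contra hv
      rw [if_neg hv] at hw
      exact hw rfl
    · intro hall
      have := hall _ (by rw [h0]; exact he)
      have hlen : (List.replicate r x₀).length
          = (List.replicate (r-1) x₀ ++ [x₁]).length := by
        simp; omega
      exact word_ne_rep r r (this.eq_of_length hlen).symm
    · have hn : natPart c (List.replicate (r-1) x₀ ++ [x₁]) = 0 := by
        simp only [natPart, if_neg (word_ne_rep r _)]
      rw [Pi.sub_apply, hn, sub_zero] at h0
      rw [h0]
      exact he
end
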